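/- Let K ⊆ E be a compact convex set containing at least two points, with 0 in the interior of K, and let K° := {u ∈ E : ⟨u,y⟩ ≤ 1 for all y ∈ K} be its polar body. Then the map F ↦ pos(F) is a bijection from the set of faces of K° onto the set of touching cones of K, and for all faces F, G of K° one has F ⊆ G if and only if pos(F) ⊆ pos(G); that is, pos defines an isotone lattice isomorphism from the face lattice of K° onto the touching cone lattice of K. -/

import Mathlib

open scoped Pointwise RealInnerProductSpace

variable {E : Type*} [NormedAddCommGroup E] [InnerProductSpace ℝ E] [FiniteDimensional ℝ E]

/-- `F` is a face of the convex set `C`: a convex subset of `C` such that whenever an open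
segment between two points of `C` meets `F`, both endpoints belong to `F`. -/
def IsFace (C F : Set E) : Prop :=
  Convex ℝ F ∧ F ⊆ C ∧
    ∀ x ∈ C, ∀ y ∈ C, (openSegment ℝ x y ∩ F).Nonempty → x ∈ F ∧ y ∈ F

/-- The exposed face `F⊥(C,u)` of `C` by the vector `u`: the points of `C` where `⟨u,·⟩`
attains its supremum over `C`. -/
def expFace (C : Set E) (u : E) : Set E :=
  {x ∈ C | ∀ y ∈ C, ⟪u, y⟫ ≤ ⟪u, x⟫}

/-- `F` is an exposed face of `C`: either `∅`, or `C`, or `F⊥(C,u)` for some nonzero `u`. -/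
def IsExpFace (C F : Set E) : Prop :=
  F = ∅ ∨ F = C ∨ ∃ u : E, u ≠ 0 ∧ F = expFace C u

/-- The normal cone `N(C,x)` of `C` at the point `x`. -/
def normalCone (C : Set E) (x : E) : Set E :=
  {u | ∀ y ∈ C, ⟪u, y - x⟫ ≤ 0}

/-- The normal cone `N(C,F)` of `C` at a subset `F`; for a nonempty convex `F ⊆ C` it agrees
with `normalCone C x` for any `x` in the relative interior of `F` (all these coincide), and
for `F = ∅` it is all of `E`. -/
def normalConeOf (C F : Set E) : Set E :=
  ⋂ x ∈ intrinsicInterior ℝ F, normalCone C x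

/-- `N` is a normal cone of `C`: the normal cone of some face of `C`. -/
def IsNormalCone (C N : Set E) : Prop :=
  ∃ F, IsFace C F ∧ N = normalConeOf C F

/-- `T` is a touching cone of `C`: a nonempty face of a normal cone of `C`. -/
def IsTouchingCone (C T : Set E) : Prop :=
  T.Nonempty ∧ ∃ N, IsNormalCone C N ∧ IsFace N T

/-- The positive hull of a set: all finite nonnegative combinations (`posHull ∅ = {0}`). -/
def posHull (S : Set E) : Set E :=
  {x | ∃ (k : ℕ) (c : Fin k → ℝ) (s : Fin k → E),
    (∀ i, 0 ≤ c i) ∧ (∀ i, s i ∈ S) ∧ x = ∑ i, c i • s i}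

/-- A vector `u` is sharp normal for `C` if every `x ∈ ri(F⊥(C,u))` satisfies
`u ∈ ri(N(C,x))`. -/
def SharpNormal (C : Set E) (u : E) : Prop :=
  ∀ x ∈ intrinsicInterior ℝ (expFace C u), u ∈ intrinsicInterior ℝ (normalCone C x)

/-- A point `x` is sharp exposed in `C` if every nonzero `u ∈ ri(N(C,x))` satisfies
`x ∈ ri(F⊥(C,u))`. -/
def SharpExposed (C : Set E) (x : E) : Prop :=
  ∀ u ∈ intrinsicInterior ℝ (normalCone C x), u ≠ 0 → x ∈ intrinsicInterior ℝ (expFace C u)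

/-- The smallest exposed face of `C` containing `F`: the intersection of all exposed faces
of `C` containing `F`. -/
def supExp (C F : Set E) : Set E :=
  ⋂₀ {G | IsExpFace C G ∧ F ⊆ G}

/-- The polar body of `K`. -/
def polarBody (K : Set E) : Set E := {u | ∀ y ∈ K, ⟪u, y⟫ ≤ 1}

lemma posHull_zero_mem (S : Set E) : (0:E) ∈ posHull S :=
  ⟨0, Fin.elim0, Fin.elim0, fun i => i.elim0, fun i => i.elim0, by simp⟩

lemma posHull_mono {S T : Set E} (h : S ⊆ T) : posHull S ⊆ posHull T := by
  rintro x ⟨k, c, s, hc, hs, rfl⟩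
  exact ⟨k, c, s, hc, fun i => h (hs i), rfl⟩

lemma posHull_empty : posHull (∅ : Set E) = {0} := by
  ext z
  constructor
  · rintro ⟨k, c, s, hc, hs, rfl⟩
    have : ∀ i : Fin k, False := fun i => hs i
    simp only [Set.mem_singleton_iff]
    rcases Nat.eq_zero_or_pos k with rfl | hk
    · simp
    · exact absurd (this ⟨0, hk⟩) id
  · rintro rfl; exact posHull_zero_mem _

lemma smul_mem_posHull {S : Set E} {t : ℝ} (ht : 0 ≤ t) {g : E} (hg : g ∈ S) :
    t • g ∈ posHull S :=
  ⟨1, fun _ => t, fun _ => g, fun _ => ht, fun _ => hg, by simp⟩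

lemma mem_posHull_self {S : Set E} {g : E} (hg : g ∈ S) : g ∈ posHull S := by
  have := smul_mem_posHull (zero_le_one : (0:ℝ) ≤ 1) hg
  rwa [one_smul] at this

lemma posHull_add {S : Set E} {a b : E} (ha : a ∈ posHull S) (hb : b ∈ posHull S) :
    a + b ∈ posHull S := by
  obtain ⟨k1, c1, s1, hc1, hs1, rfl⟩ := ha
  obtain ⟨k2, c2, s2, hc2, hs2, rfl⟩ := hb
  refine ⟨k1 + k2, Fin.append c1 c2, Fin.append s1 s2, ?_, ?_, ?_⟩
  · intro i
    refine Fin.addCases (fun j => ?_) (fun j => ?_) i <;> simp [hc1, hc2]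
  · intro i
    refine Fin.addCases (fun j => ?_) (fun j => ?_) i <;> simp [hs1 _, hs2 _]
  · rw [Fin.sum_univ_add]
    simp

lemma posHull_smul {S : Set E} {t : ℝ} (ht : 0 ≤ t) {a : E} (ha : a ∈ posHull S) :
    t • a ∈ posHull S := by
  obtain ⟨k, c, s, hc, hs, rfl⟩ := ha
  refine ⟨k, fun i => t * c i, s, fun i => mul_nonneg ht (hc i), hs, ?_⟩
  rw [Finset.smul_sum]
  simp [smul_smul]

lemma posHull_convex (S : Set E) : Convex ℝ (posHull S) := by
  intro a ha b hb p q hp hq _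
  exact posHull_add (posHull_smul hp ha) (posHull_smul hq hb)

lemma mem_posHull_of_convex {G : Set E} (hG : Convex ℝ G) {z : E} (hz : z ∈ posHull G) :
    z = 0 ∨ ∃ t : ℝ, 0 < t ∧ ∃ g ∈ G, z = t • g := by
  obtain ⟨k, c, s, hc, hs, rfl⟩ := hz
  set T := ∑ i, c i with hT
  rcases eq_or_lt_of_le (Finset.sum_nonneg (fun i _ => hc i) : (0:ℝ) ≤ T) with h0 | hpos
  · left
    have : ∀ i ∈ Finset.univ, c i = 0 :=
      (Finset.sum_eq_zero_iff_of_nonneg (fun i _ => hc i)).1 h0.symm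
    exact Finset.sum_eq_zero fun i hi => by rw [this i hi, zero_smul]
  · right
    refine ⟨T, hpos, ∑ i, (c i / T) • s i, ?_, ?_⟩
    · exact hG.sum_mem (fun i _ => div_nonneg (hc i) hpos.le)
        (by rw [← Finset.sum_div]; exact div_self hpos.ne') (fun i _ => hs i)
    · rw [Finset.smul_sum]
      refine Finset.sum_congr rfl fun i _ => ?_
      rw [smul_smul, mul_div_cancel₀ _ hpos.ne']

lemma isFace_self {C : Set E} (hC : Convex ℝ C) : IsFace C C :=
  ⟨hC, le_refl _, fun x hx y hy _ => ⟨hx, hy⟩⟩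

lemma isFace_empty {C : Set E} : IsFace C (∅ : Set E) :=
  ⟨convex_empty, Set.empty_subset _, fun x _ y _ h => absurd h (by simp)⟩

lemma isFace_trans {C G F : Set E} (hG : IsFace C G) (hF : IsFace G F) : IsFace C F :=
  ⟨hF.1, hF.2.1.trans hG.2.1, fun x hx y hy hseg => by
    obtain ⟨hx', hy'⟩ := hG.2.2 x hx y hy (hseg.mono (Set.inter_subset_inter_right _ hF.2.1))
    exact hF.2.2 x hx' y hy' hseg⟩

lemma isFace_mono {C F G : Set E} (hF : IsFace C F) (hGC : G ⊆ C) (hFG : F ⊆ G) :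
    IsFace G F :=
  ⟨hF.1, hFG, fun x hx y hy hseg => hF.2.2 x (hGC hx) y (hGC hy) hseg⟩

/-- Extension lemma: from a point of the intrinsic interior, a segment to any point of the
set can be extended slightly beyond within the set. -/
lemma extend_intrinsic {S : Set E} {p q : E} (hp : p ∈ intrinsicInterior ℝ S) (hq : q ∈ S) :
    ∃ s : ℝ, 0 < s ∧ p + s • (p - q) ∈ S := by
  obtain ⟨z, hz, hzp⟩ := mem_intrinsicInterior.1 hp
  have hpS : p ∈ S := intrinsicInterior_subset hp
  have hpA : p ∈ affineSpan ℝ S := subset_affineSpan ℝ S hpS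
  have hqA : q ∈ affineSpan ℝ S := subset_affineSpan ℝ S hq
  have hmem : ∀ t : ℝ, p + t • (p - q) ∈ affineSpan ℝ S := by
    intro t
    have h1 := AffineMap.lineMap_mem (1 + t) hqA hpA
    have h2 : (AffineMap.lineMap q p : ℝ → E) (1 + t) = p + t • (p - q) := by
      simp only [AffineMap.lineMap_apply_module]
      module
    rwa [h2] at h1
  set γ : ℝ → affineSpan ℝ S := fun t => ⟨p + t • (p - q), hmem t⟩ with hγ
  have hcont : Continuous γ := by
    apply Continuous.subtype_mk
    exact continuous_const.add (continuous_id.smul continuous_const)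
  have hγ0 : γ 0 = z := by
    apply Subtype.ext
    simp [hγ, hzp]
  have hopen : IsOpen (γ ⁻¹' interior (((↑) : affineSpan ℝ S → E) ⁻¹' S)) :=
    isOpen_interior.preimage hcont
  have h0mem : (0:ℝ) ∈ γ ⁻¹' interior (((↑) : affineSpan ℝ S → E) ⁻¹' S) := by
    simp only [Set.mem_preimage, hγ0]; exact hz
  obtain ⟨ε, hε, hball⟩ := Metric.isOpen_iff.1 hopen 0 h0mem
  refine ⟨ε/2, by positivity, ?_⟩
  have hmem2 : (ε/2 : ℝ) ∈ γ ⁻¹' interior (((↑) : affineSpan ℝ S → E) ⁻¹' S) := by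
    apply hball
    simp only [Metric.mem_ball, Real.dist_eq, sub_zero]
    rw [abs_of_pos (by positivity)]
    linarith
  have : γ (ε/2) ∈ ((↑) : affineSpan ℝ S → E) ⁻¹' S := interior_subset hmem2
  exact this

/-- The normal cone is constant on the relative interior. -/
lemma normalConeOf_eq {K G : Set E} (hGK : G ⊆ K) {x₀ : E}
    (hx₀ : x₀ ∈ intrinsicInterior ℝ G) : normalConeOf K G = normalCone K x₀ := by
  have key : ∀ u ∈ normalCone K x₀, ∀ x' ∈ G, ⟪u, x'⟫ = ⟪u, x₀⟫ := by
    intro u hu x' hx'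
    have h1 : ⟪u, x' - x₀⟫ ≤ 0 := hu x' (hGK hx')
    obtain ⟨s, hs, hz⟩ := extend_intrinsic hx₀ hx'
    have h2 : ⟪u, (x₀ + s • (x₀ - x')) - x₀⟫ ≤ 0 := hu _ (hGK hz)
    have h2' : s * ⟪u, x₀ - x'⟫ ≤ 0 := by
      rw [add_sub_cancel_left, real_inner_smul_right] at h2; exact h2
    have h3 : ⟪u, x₀ - x'⟫ ≤ 0 := by nlinarith
    rw [inner_sub_right] at h1 h3
    linarith
  apply Set.Subset.antisymm
  · exact Set.biInter_subset_of_mem hx₀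
  · intro u hu
    apply Set.mem_biInter
    intro x' hx'
    intro y hy
    have e1 : ⟪u, x'⟫ = ⟪u, x₀⟫ := key u hu x' (intrinsicInterior_subset hx')
    have := hu y hy
    rw [inner_sub_right] at this ⊢
    linarith

lemma polarBody_convex (K : Set E) : Convex ℝ (polarBody K) := by
  intro u hu v hv p q hp hq hpq
  intro z hz
  have := hu z hz; have := hv z hz
  rw [inner_add_left, real_inner_smul_left, real_inner_smul_left]
  nlinarith

/-- The conjugate face of `K` at `x ∈ K` is a face of the polar body. -/
lemma isFace_conj {K : Set E} {x : E} (hx : x ∈ K) :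
    IsFace (polarBody K) {u ∈ polarBody K | ⟪u, x⟫ = 1} := by
  refine ⟨?_, fun u hu => hu.1, ?_⟩
  · intro u hu v hv p q hp hq hpq
    refine ⟨polarBody_convex K hu.1 hv.1 hp hq hpq, ?_⟩
    rw [inner_add_left, real_inner_smul_left, real_inner_smul_left, hu.2, hv.2]
    linarith
  · rintro u hu v hv ⟨w, ⟨p, q, hp, hq, hpq, hw⟩, hwF⟩
    have hu1 : ⟪u, x⟫ ≤ 1 := hu x hx
    have hv1 : ⟪v, x⟫ ≤ 1 := hv x hx
    have hw1 : ⟪w, x⟫ = 1 := hwF.2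
    have : p * ⟪u, x⟫ + q * ⟪v, x⟫ = 1 := by
      rw [← hw1, ← hw, inner_add_left, real_inner_smul_left, real_inner_smul_left]
    have hu2 : ⟪u, x⟫ = 1 := by nlinarith
    have hv2 : ⟪v, x⟫ = 1 := by nlinarith
    exact ⟨⟨hu, hu2⟩, ⟨hv, hv2⟩⟩

/-- `N(K,x) = pos(F̂(x))` where `F̂(x)` is the conjugate face. -/
lemma normalCone_eq_posHull {K : Set E} {r : ℝ} (hr : 0 < r)
    (hball : Metric.ball (0:E) r ⊆ K) {x : E} (hx : x ∈ K) :
    normalCone K x = posHull {u ∈ polarBody K | ⟪u, x⟫ = 1} := by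
  apply Set.Subset.antisymm
  · intro u hu
    rcases eq_or_ne u 0 with rfl | hu0
    · exact posHull_zero_mem _
    · set t := ⟪u, x⟫ with ht
      have htpos : 0 < t := by
        have hy : (r / (2 * ‖u‖)) • u ∈ K := by
          apply hball
          simp only [Metric.mem_ball, dist_zero_right, norm_smul, Real.norm_eq_abs]
          have hn : (0:ℝ) < ‖u‖ := norm_pos_iff.2 hu0
          rw [abs_of_pos (div_pos hr (by positivity))]
          rw [div_mul_eq_mul_div, div_lt_iff₀ (by positivity)]
          nlinarith
        have := hu _ hy
        rw [inner_sub_right, real_inner_smul_right, real_inner_self_eq_norm_sq] at this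
        have hn : 0 < ‖u‖ := norm_pos_iff.2 hu0
        have : r / (2 * ‖u‖) * ‖u‖^2 ≤ t := by linarith [this]
        calc (0:ℝ) < r / (2 * ‖u‖) * ‖u‖^2 := by positivity
          _ ≤ t := this
      have hmem : t⁻¹ • u ∈ {u ∈ polarBody K | ⟪u, x⟫ = 1} := by
        constructor
        · intro z hz
          rw [real_inner_smul_left]
          have h1 : ⟪u, z - x⟫ ≤ 0 := hu z hz
          rw [inner_sub_right] at h1
          calc t⁻¹ * ⟪u, z⟫ ≤ t⁻¹ * t := by
                apply mul_le_mul_of_nonneg_left (by linarith) (by positivity)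
            _ = 1 := inv_mul_cancel₀ htpos.ne'
        · rw [real_inner_smul_left, inv_mul_cancel₀ htpos.ne']
      have : t • t⁻¹ • u ∈ posHull {u ∈ polarBody K | ⟪u, x⟫ = 1} :=
        smul_mem_posHull htpos.le hmem
      rwa [smul_inv_smul₀ htpos.ne'] at this
  · rintro v ⟨k, c, s, hc, hs, rfl⟩
    intro z hz
    rw [sum_inner]
    apply Finset.sum_nonpos
    intro i _
    rw [real_inner_smul_left]
    apply mul_nonpos_of_nonneg_of_nonpos (hc i)
    rw [inner_sub_right, (hs i).2]
    have := (hs i).1 z hz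
    linarith

/-- A face containing an interior point is everything. -/
lemma face_eq_of_interior {P F : Set E} (hF : IsFace P F) {u : E}
    (huF : u ∈ F) (huI : u ∈ interior P) : F = P := by
  apply Set.Subset.antisymm hF.2.1
  intro p hp
  rcases eq_or_ne p u with rfl | hne
  · exact huF
  obtain ⟨ε, hε, hball⟩ := Metric.isOpen_iff.1 isOpen_interior u huI
  set s : ℝ := ε / (2 * ‖u - p‖) with hs
  have hnorm : 0 < ‖u - p‖ := by
    rw [norm_pos_iff]; exact sub_ne_zero.2 (Ne.symm hne)
  have hspos : 0 < s := by positivity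
  have hz : u + s • (u - p) ∈ P := by
    apply interior_subset
    apply hball
    simp only [Metric.mem_ball, dist_self_add_left, norm_smul, Real.norm_eq_abs,
      abs_of_pos hspos]
    rw [hs, div_mul_eq_mul_div, div_lt_iff₀ (by positivity)]
    nlinarith
  have hseg : u ∈ openSegment ℝ p (u + s • (u - p)) := by
    refine ⟨s / (1 + s), 1 / (1 + s), by positivity, by positivity, ?_, ?_⟩
    · field_simp
      ring
    · rw [smul_add, smul_smul]
      have h1s : (1:ℝ) + s ≠ 0 := by positivity
      rw [← add_assoc]
      have : (s / (1 + s)) • p + (1 / (1 + s)) • u + (1 / (1 + s) * s) • (u - p)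
          = ((1 / (1 + s)) + (1 / (1 + s) * s)) • u + ((s / (1 + s)) - (1 / (1 + s) * s)) • p := by
        rw [smul_sub]; module
      rw [this]
      have e1 : (1 / (1 + s)) + (1 / (1 + s) * s) = 1 := by field_simp
      have e2 : (s / (1 + s)) - (1 / (1 + s) * s) = 0 := by field_simp; ring
      rw [e1, e2, one_smul, zero_smul, add_zero]
  exact (hF.2.2 p hp _ hz ⟨u, hseg, huF⟩).1

/-- The exposed face of `K` cut by `u ∈ K°` at level 1 is a face of `K`. -/
lemma isFace_cut {K : Set E} (hK : Convex ℝ K) {u : E} (hu : u ∈ polarBody K) :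
    IsFace K {x ∈ K | ⟪u, x⟫ = 1} := by
  refine ⟨?_, fun x hx => hx.1, ?_⟩
  · intro a ha b hb p q hp hq hpq
    refine ⟨hK ha.1 hb.1 hp hq hpq, ?_⟩
    rw [inner_add_right, real_inner_smul_right, real_inner_smul_right, ha.2, hb.2]
    linarith
  · rintro a ha b hb ⟨w, ⟨p, q, hp, hq, hpq, hw⟩, hwF⟩
    have ha1 : ⟪u, a⟫ ≤ 1 := hu a ha
    have hb1 : ⟪u, b⟫ ≤ 1 := hu b hb
    have : p * ⟪u, a⟫ + q * ⟪u, b⟫ = 1 := by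
      rw [← hwF.2, ← hw, inner_add_right, real_inner_smul_right, real_inner_smul_right]
    have ha2 : ⟪u, a⟫ = 1 := by nlinarith
    have hb2 : ⟪u, b⟫ = 1 := by nlinarith
    exact ⟨⟨ha, ha2⟩, ⟨hb, hb2⟩⟩

/-- For `u` in the polar body but not in its interior, the supremum 1 is attained on `K`. -/
lemma exists_inner_eq_one {K : Set E} (hKc : IsCompact K) (hne : K.Nonempty)
    {u : E} (hu : u ∈ polarBody K) (hni : u ∉ interior (polarBody K)) :
    ∃ y ∈ K, ⟪u, y⟫ = 1 := by
  obtain ⟨R₀, hR₀⟩ := hKc.isBounded.subset_closedBall 0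
  set R : ℝ := max R₀ 1 with hR
  have hRpos : (0:ℝ) < R := lt_of_lt_of_le one_pos (le_max_right _ _)
  have hRK : ∀ y ∈ K, ‖y‖ ≤ R := fun y hy =>
    le_trans (by simpa using hR₀ hy) (le_max_left _ _)
  have hcont : Continuous fun y : E => ⟪u, y⟫ := continuous_const.inner continuous_id
  obtain ⟨y₀, hy₀K, hy₀max⟩ := hKc.exists_isMaxOn hne hcont.continuousOn
  set M : ℝ := ⟪u, y₀⟫ with hM
  have hM1 : M ≤ 1 := hu y₀ hy₀K
  rcases eq_or_lt_of_le hM1 with h | h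
  · exact ⟨y₀, hy₀K, h⟩
  · exfalso
    apply hni
    have : Metric.ball u ((1 - M)/R) ⊆ polarBody K := by
      intro w hw
      intro z hz
      have h1 : ⟪w, z⟫ - ⟪u, z⟫ = ⟪w - u, z⟫ := (inner_sub_left _ _ _).symm
      have h2 : ⟪u, z⟫ ≤ M := hy₀max hz
      have h3 : ⟪w - u, z⟫ ≤ ‖w - u‖ * ‖z‖ := real_inner_le_norm _ _
      have h4 : ‖w - u‖ < (1 - M)/R := by
        rw [← dist_eq_norm]; exact hw
      have h4' : 0 ≤ (1 - M)/R := le_of_lt (lt_of_le_of_lt (norm_nonneg _) h4)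
      have h5 : ‖w - u‖ * ‖z‖ ≤ ((1 - M)/R) * R := by
        exact mul_le_mul h4.le (hRK z hz) (norm_nonneg _) h4' 
      rw [div_mul_cancel₀ _ hRpos.ne'] at h5
      linarith
    exact interior_maximal this Metric.isOpen_ball
      (Metric.mem_ball_self (div_pos (by linarith) hRpos))

/-- Faces of the whole space: a nonempty face of `univ` is `univ`. -/
lemma face_univ {T : Set E} (hT : IsFace Set.univ T) (hne : T.Nonempty) : T = Set.univ := by
  obtain ⟨f, hf⟩ := hne
  apply Set.eq_univ_of_forall
  intro w
  have hseg : f ∈ openSegment ℝ w ((2:ℝ) • f - w) := by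
    refine ⟨1/2, 1/2, by norm_num, by norm_num, by norm_num, ?_⟩
    module
  exact (hT.2.2 w trivial _ trivial ⟨f, hseg, hf⟩).1

/-- The positive hull of the polar body is everything (when `K` is bounded). -/
lemma posHull_polarBody {K : Set E} (hKc : IsCompact K) : posHull (polarBody K) = Set.univ := by
  obtain ⟨R₀, hR₀⟩ := hKc.isBounded.subset_closedBall 0
  set R : ℝ := max R₀ 1 with hR
  have hRpos : (0:ℝ) < R := lt_of_lt_of_le one_pos (le_max_right _ _)
  have hRK : ∀ y ∈ K, ‖y‖ ≤ R := fun y hy =>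
    le_trans (by simpa using hR₀ hy) (le_max_left _ _)
  apply Set.eq_univ_of_forall
  intro w
  set t : ℝ := R * ‖w‖ + 1 with hts
  have htpos : 0 < t := by positivity
  have hmem : t⁻¹ • w ∈ polarBody K := by
    intro z hz
    rw [real_inner_smul_left]
    have h1 : ⟪w, z⟫ ≤ ‖w‖ * ‖z‖ := real_inner_le_norm _ _
    have h2 : ‖w‖ * ‖z‖ ≤ ‖w‖ * R := mul_le_mul_of_nonneg_left (hRK z hz) (norm_nonneg _)
    have hwt : ⟪w, z⟫ ≤ t := by nlinarith
    calc t⁻¹ * ⟪w, z⟫ ≤ t⁻¹ * t := mul_le_mul_of_nonneg_left hwt (by positivity)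
      _ = 1 := inv_mul_cancel₀ htpos.ne'
  have := smul_mem_posHull htpos.le hmem
  rwa [smul_inv_smul₀ htpos.ne'] at this

/-- P5a: cones over faces are faces of the cone. -/
lemma posHull_face_posHull {G F : Set E} {x : E} (hGH : ∀ g ∈ G, ⟪g, x⟫ = 1)
    (hGne : G.Nonempty) (hGcv : Convex ℝ G) (hF : IsFace G F) :
    IsFace (posHull G) (posHull F) := by
  obtain ⟨g₀, hg₀⟩ := hGne
  have repr : ∀ a ∈ posHull G, ∃ t : ℝ, 0 ≤ t ∧ ∃ g ∈ G, a = t • g := by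
    intro a ha
    rcases mem_posHull_of_convex hGcv ha with rfl | ⟨t, ht, g, hg, rfl⟩
    · exact ⟨0, le_rfl, g₀, hg₀, by simp⟩
    · exact ⟨t, ht.le, g, hg, rfl⟩
  refine ⟨posHull_convex F, posHull_mono hF.2.1, ?_⟩
  rintro a ha b hb ⟨w, ⟨p, q, hp, hq, hpq, hw⟩, hwF⟩
  obtain ⟨t₁, ht₁, g₁, hg₁, rfl⟩ := repr a ha
  obtain ⟨t₂, ht₂, g₂, hg₂, rfl⟩ := repr b hb
  have hwx : ⟪w, x⟫ = p * t₁ + q * t₂ := by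
    rw [← hw, inner_add_left, real_inner_smul_left, real_inner_smul_left,
      real_inner_smul_left, real_inner_smul_left, hGH g₁ hg₁, hGH g₂ hg₂]
    ring
  rcases mem_posHull_of_convex hF.1 hwF with rfl | ⟨τ, hτ, f, hf, rfl⟩
  · -- w = 0
    have h0 : p * t₁ + q * t₂ = 0 := by rw [← hwx, inner_zero_left]
    have ht₁0 : t₁ = 0 := by nlinarith
    have ht₂0 : t₂ = 0 := by nlinarith
    rw [ht₁0, ht₂0, zero_smul, zero_smul]
    exact ⟨posHull_zero_mem _, posHull_zero_mem _⟩
  · -- w = τ • f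
    have hfx : ⟪f, x⟫ = 1 := hGH f (hF.2.1 hf)
    have hτx : τ = p * t₁ + q * t₂ := by
      rw [← hwx, real_inner_smul_left, hfx, mul_one]
    have hfeq : f = (τ⁻¹ * (p * t₁)) • g₁ + (τ⁻¹ * (q * t₂)) • g₂ := by
      have : τ⁻¹ • (τ • f) = τ⁻¹ • (p • t₁ • g₁ + q • t₂ • g₂) := by rw [hw]
      rw [inv_smul_smul₀ hτ.ne'] at this
      rw [this, smul_add]
      rw [smul_smul, smul_smul, smul_smul, smul_smul]
      ring_nf
    rcases eq_or_lt_of_le ht₁ with h1 | h1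
    · -- t₁ = 0
      have : f = g₂ := by
        rw [hfeq, ← h1]
        have hτ' : τ = q * t₂ := by rw [hτx, ← h1]; ring
        have : τ⁻¹ * (q * t₂) = 1 := by rw [← hτ', inv_mul_cancel₀ hτ.ne']
        rw [this]
        simp
      constructor
      · rw [← h1, zero_smul]; exact posHull_zero_mem _
      · exact smul_mem_posHull ht₂ (this ▸ hf)
    rcases eq_or_lt_of_le ht₂ with h2 | h2
    · -- t₂ = 0
      have : f = g₁ := by
        rw [hfeq, ← h2]
        have hτ' : τ = p * t₁ := by rw [hτx, ← h2]; ring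
        have : τ⁻¹ * (p * t₁) = 1 := by rw [← hτ', inv_mul_cancel₀ hτ.ne']
        rw [this]
        simp
      constructor
      · exact smul_mem_posHull ht₁ (this ▸ hf)
      · rw [← h2, zero_smul]; exact posHull_zero_mem _
    -- both positive
    have hseg : f ∈ openSegment ℝ g₁ g₂ := by
      refine ⟨τ⁻¹ * (p * t₁), τ⁻¹ * (q * t₂), mul_pos (inv_pos.2 hτ) (mul_pos hp h1),
        mul_pos (inv_pos.2 hτ) (mul_pos hq h2), ?_, hfeq.symm⟩
      rw [← mul_add, ← hτx, inv_mul_cancel₀ hτ.ne']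
    obtain ⟨hg₁F, hg₂F⟩ := hF.2.2 g₁ hg₁ g₂ hg₂ ⟨f, hseg, hf⟩
    exact ⟨smul_mem_posHull ht₁ hg₁F, smul_mem_posHull ht₂ hg₂F⟩

/-- P5b: each nonempty face of a cone over a convex set is the cone over a face. -/
lemma face_posHull_structure {G T : Set E} (hGcv : Convex ℝ G)
    (hT : IsFace (posHull G) T) (hTne : T.Nonempty) :
    T = posHull (T ∩ G) ∧ IsFace G (T ∩ G) := by
  -- 0 ∈ T
  have h0T : (0:E) ∈ T := by
    obtain ⟨w₀, hw₀⟩ := hTne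
    rcases mem_posHull_of_convex hGcv (hT.2.1 hw₀) with h | ⟨t, ht, g, hg, hwg⟩
    · rwa [h] at hw₀
    · have h2w : (2:ℝ) • w₀ ∈ posHull G := by
        rw [hwg, smul_smul]; exact smul_mem_posHull (by linarith) hg
      have hseg : w₀ ∈ openSegment ℝ (0:E) ((2:ℝ) • w₀) := by
        refine ⟨1/2, 1/2, by norm_num, by norm_num, by norm_num, ?_⟩
        module
      exact (hT.2.2 0 (posHull_zero_mem _) _ h2w ⟨w₀, hseg, hw₀⟩).1
  -- positive scaling
  have hscale : ∀ w ∈ T, ∀ s : ℝ, 0 < s → s • w ∈ T := by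
    intro w hw s hs
    rcases mem_posHull_of_convex hGcv (hT.2.1 hw) with h | ⟨t, ht, g, hg, hwg⟩
    · rw [h, smul_zero]; exact h0T
    rcases lt_trichotomy s 1 with hs1 | hs1 | hs1
    · -- endpoints s•w and 2•w
      have h2s : (2:ℝ) - s ≠ 0 := by linarith
      have ha : s • w ∈ posHull G := by
        rw [hwg, smul_smul]; exact smul_mem_posHull (by nlinarith) hg
      have hb : (2:ℝ) • w ∈ posHull G := by
        rw [hwg, smul_smul]; exact smul_mem_posHull (by nlinarith) hg
      have hseg : w ∈ openSegment ℝ (s • w) ((2:ℝ) • w) := by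
        refine ⟨1/(2-s), (1-s)/(2-s), ?_, ?_, ?_, ?_⟩
        · apply div_pos <;> linarith
        · apply div_pos <;> linarith
        · field_simp; ring
        · rw [smul_smul, smul_smul, ← add_smul]
          have heq : 1/(2-s) * s + (1-s)/(2-s) * 2 = 1 := by field_simp; ring
          rw [heq, one_smul]
      exact (hT.2.2 _ ha _ hb ⟨w, hseg, hw⟩).1
    · rw [hs1, one_smul]; exact hw
    · -- endpoints 0 and s•w
      have hb : s • w ∈ posHull G := by
        rw [hwg, smul_smul]; exact smul_mem_posHull (by nlinarith) hg
      have hseg : w ∈ openSegment ℝ (0:E) (s • w) := by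
        refine ⟨1 - 1/s, 1/s, by
          have : 1/s < 1 := by rw [div_lt_one (by linarith)]; linarith
          linarith, by positivity, by ring, ?_⟩
        rw [smul_zero, zero_add, smul_smul]
        rw [one_div, inv_mul_cancel₀ (by positivity), one_smul]
      exact (hT.2.2 _ (posHull_zero_mem _) _ hb ⟨w, hseg, hw⟩).2
  constructor
  · apply Set.Subset.antisymm
    · intro w hw
      rcases mem_posHull_of_convex hGcv (hT.2.1 hw) with h | ⟨t, ht, g, hg, hwg⟩
      · rw [h]; exact posHull_zero_mem _
      · have hgT : g ∈ T := by
          have := hscale w hw t⁻¹ (inv_pos.2 ht)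
          rwa [hwg, inv_smul_smul₀ ht.ne'] at this
        rw [hwg]
        exact smul_mem_posHull ht.le ⟨hgT, hg⟩
    · intro w hw
      rcases mem_posHull_of_convex (hT.1.inter hGcv) hw with h | ⟨t, ht, f, hf, hwf⟩
      · rw [h]; exact h0T
      · rw [hwf]; exact hscale f hf.1 t ht
  · refine ⟨hT.1.inter hGcv, Set.inter_subset_right, ?_⟩
    intro a ha b hb ⟨w, hwseg, hwF⟩
    have := hT.2.2 a (mem_posHull_self ha) b (mem_posHull_self hb) ⟨w, hwseg, hwF.1⟩
    exact ⟨⟨this.1, ha⟩, ⟨this.2, hb⟩⟩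

/-- For a compact convex set `K` with at least two points and `0` in its
interior, the map `F ↦ pos(F)` is a bijection from the faces of the polar body `K°` onto
the touching cones of `K`, and is an isotone lattice isomorphism:
`F ⊆ G ↔ pos(F) ⊆ pos(G)`. -/
theorem stmt_18 (K : Set E) (hK : Convex ℝ K) (hKc : IsCompact K)
    (x y : E) (hx : x ∈ K) (hy : y ∈ K) (hxy : x ≠ y) (h0 : 0 ∈ interior K) :
    (∀ F, IsFace (polarBody K) F → IsTouchingCone K (posHull F)) ∧
    (∀ T, IsTouchingCone K T → ∃ F, IsFace (polarBody K) F ∧ posHull F = T) ∧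
    (∀ F G, IsFace (polarBody K) F → IsFace (polarBody K) G →
      posHull F = posHull G → F = G) ∧
    (∀ F G, IsFace (polarBody K) F → IsFace (polarBody K) G →
      (F ⊆ G ↔ posHull F ⊆ posHull G)) := by
  set P := polarBody K with hPdef
  have hPcv : Convex ℝ P := polarBody_convex K
  have h0K : (0:E) ∈ K := interior_subset h0
  obtain ⟨r, hrpos, hrball⟩ := Metric.isOpen_iff.1 isOpen_interior 0 h0
  have hrK : Metric.ball (0:E) r ⊆ K := hrball.trans interior_subset
  -- bound for K
  obtain ⟨R₀, hR₀⟩ := hKc.isBounded.subset_closedBall 0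
  set R : ℝ := max R₀ 1 with hR
  have hRpos : (0:ℝ) < R := lt_of_lt_of_le one_pos (le_max_right _ _)
  have hRK : ∀ z ∈ K, ‖z‖ ≤ R := fun z hz =>
    le_trans (by simpa using hR₀ hz) (le_max_left _ _)
  -- 0 is interior to the polar body
  have h0P : (0:E) ∈ interior P := by
    have hball : Metric.ball (0:E) (R + 1)⁻¹ ⊆ P := by
      intro w hw z hz
      have h1 : ⟪w, z⟫ ≤ ‖w‖ * ‖z‖ := real_inner_le_norm _ _
      have h2 : ‖w‖ < (R + 1)⁻¹ := by simpa [dist_zero_right] using hw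
      have h3 : ‖w‖ * ‖z‖ ≤ ‖w‖ * R := mul_le_mul_of_nonneg_left (hRK z hz) (norm_nonneg _)
      have h4 : ‖w‖ * R ≤ (R + 1)⁻¹ * R := mul_le_mul_of_nonneg_right h2.le hRpos.le
      have h5 : (R + 1)⁻¹ * R < 1 := by
        rw [inv_mul_lt_iff₀ (by positivity)]; linarith
      linarith
    exact interior_maximal hball Metric.isOpen_ball (Metric.mem_ball_self (by positivity))
  have hKne : K.Nonempty := ⟨x, hx⟩
  -- elements of proper faces are not interior
  have hProper : ∀ {F : Set E}, IsFace P F → F ≠ P → ∀ v ∈ F, v ∉ interior P := by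
    intro F hF hFP v hv hvi
    exact hFP (face_eq_of_interior hF hv hvi)
  have hone : ∀ {v : E}, v ∈ P → v ∉ interior P → ∃ z ∈ K, ⟪v, z⟫ = 1 :=
    fun hv hvi => exists_inner_eq_one hKc hKne hv hvi
  -- normal cone over the empty face is everything
  have hNempty : normalConeOf K (∅ : Set E) = Set.univ := by
    rw [normalConeOf, intrinsicInterior_empty]
    simp
  -- normal cone over K itself is {0}
  have hNfull : normalConeOf K K = {0} := by
    have h0ri : (0:E) ∈ intrinsicInterior ℝ K := interior_subset_intrinsicInterior h0
    rw [normalConeOf_eq (subset_refl K) h0ri, normalCone_eq_posHull hrpos hrK h0K]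
    have : {u : E | u ∈ P ∧ ⟪u, (0:E)⟫ = 1} = ∅ := by
      ext u; simp [inner_zero_right]
    rw [hPdef] at this
    rw [this, posHull_empty]
  -- Part A: faces map to touching cones
  have partA : ∀ F, IsFace P F → IsTouchingCone K (posHull F) := by
    intro F hF
    rcases eq_or_ne F ∅ with rfl | hFne
    · rw [posHull_empty]
      refine ⟨⟨0, rfl⟩, {0}, ⟨K, isFace_self hK, hNfull.symm⟩, ?_⟩
      exact ⟨convex_singleton 0, subset_refl _, fun a ha b hb _ => ⟨ha, hb⟩⟩
    rcases eq_or_ne F P with rfl | hFP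
    · rw [posHull_polarBody hKc]
      refine ⟨Set.univ_nonempty, Set.univ, ⟨∅, isFace_empty, hNempty.symm⟩, ?_⟩
      exact ⟨convex_univ, subset_refl _, fun a ha b hb _ => ⟨ha, hb⟩⟩
    -- proper nonempty face
    have hFnonempty : F.Nonempty := Set.nonempty_iff_ne_empty.2 hFne
    obtain ⟨u, hu⟩ := Set.Nonempty.intrinsicInterior hF.1 hFnonempty
    have huF : u ∈ F := intrinsicInterior_subset hu
    have huP : u ∈ P := hF.2.1 huF
    have huni : u ∉ interior P := hProper hF hFP u huF
    obtain ⟨x₁, hx₁K, hx₁⟩ := hone huP huni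
    set G : Set E := {z ∈ K | ⟪u, z⟫ = 1} with hGdef
    have hGface : IsFace K G := isFace_cut hK huP
    have hGne : G.Nonempty := ⟨x₁, hx₁K, hx₁⟩
    obtain ⟨x₀, hx₀⟩ := Set.Nonempty.intrinsicInterior hGface.1 hGne
    have hx₀G : x₀ ∈ G := intrinsicInterior_subset hx₀
    have hx₀K : x₀ ∈ K := hx₀G.1
    have hux₀ : ⟪u, x₀⟫ = 1 := hx₀G.2
    have hNG : normalConeOf K G = normalCone K x₀ := normalConeOf_eq (fun z hz => hz.1) hx₀
    set Ghat : Set E := {v ∈ P | ⟪v, x₀⟫ = 1} with hGhatdef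
    have hNG2 : normalCone K x₀ = posHull Ghat := normalCone_eq_posHull hrpos hrK hx₀K
    have hGhatface : IsFace P Ghat := isFace_conj hx₀K
    have huGhat : u ∈ Ghat := ⟨huP, hux₀⟩
    -- F ⊆ Ghat
    have hFsub : F ⊆ Ghat := by
      intro v hv
      have hvP : v ∈ P := hF.2.1 hv
      have hvle : ⟪v, x₀⟫ ≤ 1 := hvP x₀ hx₀K
      obtain ⟨s, hs, hw⟩ := extend_intrinsic hu hv
      have hwP : u + s • (u - v) ∈ P := hF.2.1 hw
      have hwle : ⟪u + s • (u - v), x₀⟫ ≤ 1 := hwP x₀ hx₀K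
      rw [inner_add_left, real_inner_smul_left, inner_sub_left, hux₀] at hwle
      have : ⟪v, x₀⟫ = 1 := by nlinarith
      exact ⟨hvP, this⟩
    have hFfaceGhat : IsFace Ghat F := isFace_mono hF hGhatface.2.1 hFsub
    have hmain : IsFace (posHull Ghat) (posHull F) :=
      posHull_face_posHull (fun g hg => hg.2) ⟨u, huGhat⟩ hGhatface.1 hFfaceGhat
    refine ⟨⟨0, posHull_zero_mem _⟩, posHull Ghat, ⟨G, hGface, ?_⟩, hmain⟩
    rw [hNG, hNG2]
  -- Part B: surjectivity
  have partB : ∀ T, IsTouchingCone K T → ∃ F, IsFace P F ∧ posHull F = T := by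
    rintro T ⟨hTne, N, ⟨G₀, hG₀face, rfl⟩, hTface⟩
    rcases Set.eq_empty_or_nonempty G₀ with rfl | hG₀ne
    · rw [hNempty] at hTface
      have := face_univ hTface hTne
      subst this
      exact ⟨P, isFace_self hPcv, posHull_polarBody hKc⟩
    · obtain ⟨x₀, hx₀⟩ := Set.Nonempty.intrinsicInterior hG₀face.1 hG₀ne
      have hx₀K : x₀ ∈ K := hG₀face.2.1 (intrinsicInterior_subset hx₀)
      have hNG : normalConeOf K G₀ = posHull {v ∈ P | ⟪v, x₀⟫ = 1} := by
        rw [normalConeOf_eq hG₀face.2.1 hx₀, normalCone_eq_posHull hrpos hrK hx₀K]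
      rw [hNG] at hTface
      have hGhatface : IsFace P {v ∈ P | ⟪v, x₀⟫ = 1} := isFace_conj hx₀K
      obtain ⟨hTeq, hTf⟩ := face_posHull_structure hGhatface.1 hTface hTne
      exact ⟨T ∩ {v ∈ P | ⟪v, x₀⟫ = 1}, isFace_trans hGhatface hTf, hTeq.symm⟩
  -- Part D: order isomorphism
  have partD : ∀ F G, IsFace P F → IsFace P G → (F ⊆ G ↔ posHull F ⊆ posHull G) := by
    intro F G hF hG
    constructor
    · exact posHull_mono
    · intro hsub
      -- auxiliary: a face whose posHull is everything is P itself
      have hall : ∀ {G' : Set E}, IsFace P G' → posHull G' = Set.univ → G' = P := by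
        intro G' hG' hG'univ
        by_contra hne
        rcases Set.eq_empty_or_nonempty G' with rfl | ⟨g₀, hg₀⟩
        · rw [posHull_empty] at hG'univ
          have : x - y ∈ ({0} : Set E) := hG'univ ▸ Set.mem_univ _
          exact hxy (sub_eq_zero.1 this)
        · have h0G' : (0:E) ∉ G' := fun h => hne (face_eq_of_interior hG' h h0P)
          have hg₀0 : g₀ ≠ 0 := fun h => h0G' (h ▸ hg₀)
          have : -g₀ ∈ posHull G' := hG'univ ▸ Set.mem_univ _
          rcases mem_posHull_of_convex hG'.1 this with h | ⟨t, ht, g, hg, hgg⟩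
          · exact hg₀0 (by simpa [neg_eq_zero] using h)
          · -- 0 is a convex combination of g₀ and g
            have hgval : g = (-t⁻¹) • g₀ := by
              have : t⁻¹ • (-g₀) = t⁻¹ • (t • g) := by rw [hgg]
              rw [inv_smul_smul₀ ht.ne'] at this
              rw [← this, smul_neg, neg_smul]
            have h0mem : (0:E) ∈ G' := by
              have ht1 : (0:ℝ) < 1 + t := by positivity
              have hc : (1/(1+t)) • g₀ + (t/(1+t)) • g ∈ G' :=
                hG'.1 hg₀ hg (by positivity) (by positivity) (by field_simp)
              have key : (1/(1+t)) • g₀ + (t/(1+t)) • g = 0 := by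
                rw [hgval, smul_smul]
                have he : t/(1+t) * -t⁻¹ = -(1/(1+t)) := by
                  field_simp
                rw [he, neg_smul]
                exact add_neg_cancel _
              rw [key] at hc
              exact hc
            exact h0G' h0mem
      by_cases hFP : F = P
      · subst hFP
        have hGuniv : posHull G = Set.univ :=
          Set.eq_univ_of_univ_subset ((posHull_polarBody hKc) ▸ hsub)
        rw [hall hG hGuniv]
      · intro v hv
        have hvP : v ∈ P := hF.2.1 hv
        have hv0 : v ≠ 0 := fun h => hFP (face_eq_of_interior hF (h ▸ hv) h0P)
        have hvmem : v ∈ posHull G := hsub (mem_posHull_self hv)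
        rcases Set.eq_empty_or_nonempty G with rfl | hGne
        · rw [posHull_empty] at hvmem
          exact absurd hvmem hv0
        rcases mem_posHull_of_convex hG.1 hvmem with h | ⟨t, ht, g, hg, hvg⟩
        · exact absurd h hv0
        by_cases hGP : G = P
        · exact hGP ▸ hvP
        · have hgP : g ∈ P := hG.2.1 hg
          have hgni : g ∉ interior P := hProper hG hGP g hg
          have hvni : v ∉ interior P := hProper hF hFP v hv
          obtain ⟨y₁, hy₁K, hy₁⟩ := hone hgP hgni
          obtain ⟨y₂, hy₂K, hy₂⟩ := hone hvP hvni
          have e1 : ⟪v, y₁⟫ = t := by rw [hvg, real_inner_smul_left, hy₁, mul_one]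
          have e2 : (1:ℝ) = t * ⟪g, y₂⟫ := by rw [← hy₂, hvg, real_inner_smul_left]
          have h1 : t ≤ 1 := e1 ▸ hvP y₁ hy₁K
          have h2 : ⟪g, y₂⟫ ≤ 1 := hgP y₂ hy₂K
          have : t = 1 := by nlinarith
          rw [hvg, this, one_smul]
          exact hg
  refine ⟨partA, partB, ?_, partD⟩
  intro F G hF hG h
  exact Set.Subset.antisymm ((partD F G hF hG).2 h.le) ((partD G F hG hF).2 h.ge)
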